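/- Let c ≥ 2 be an integer such that 227 does not divide c + 80, and set n_1 = 3c² − 4c + 2, n_2 = 6c² + 9c + 2, n_3 = 4c² + 5c − 3, n_4 = 6c² + 6c − 11. Then the ideal I(C)_* is minimally generated by the set {x_2^c, x_2 x_4, x_4^c − x_1 x_2^{c−1}} ∪ {x_2^{c−(i+1)} x_3^{3i+1} : 0 ≤ i ≤ c−2} ∪ {x_3^{3i+1} x_4^{c−(i+1)} : 0 ≤ i ≤ c−2} ∪ {x_3^{3c−2}}, which has exactly 2c + 2 elements. -/

import Mathlib

noncomputable section

open MvPolynomial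

/-- The toric ideal `I(C)` of the monomial curve parametrized by
`x_i = t^{n_i}`: the kernel of the `K`-algebra map `K[x_1,…,x_4] → K[t]`,
`x_i ↦ t^{n_i}`. -/
def toricIdeal (K : Type*) [Field K] (n : Fin 4 → ℕ) : Ideal (MvPolynomial (Fin 4) K) :=
  RingHom.ker
    (MvPolynomial.aeval (fun i => (Polynomial.X : Polynomial K) ^ n i) :
      MvPolynomial (Fin 4) K →ₐ[K] Polynomial K)

/-- `f_*`: the homogeneous component of `f` of least total degree. -/
def star {K : Type*} [Field K] {σ : Type*} (f : MvPolynomial σ K) : MvPolynomial σ K :=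
  MvPolynomial.homogeneousComponent
    (sInf {m : ℕ | MvPolynomial.homogeneousComponent m f ≠ 0}) f

/-- `I_*`: the ideal generated by the least-degree homogeneous components `f_*`
of the nonzero elements `f ∈ I`. -/
def idealStar {K : Type*} [Field K] {σ : Type*} (I : Ideal (MvPolynomial σ K)) :
    Ideal (MvPolynomial σ K) :=
  Ideal.span {g | ∃ f ∈ I, f ≠ 0 ∧ g = star f}

/-- The depth of a local ring: the supremum of the lengths of regular sequences
consisting of elements of the maximal ideal. -/
def ringDepth (R : Type*) [CommRing R] [IsLocalRing R] : ℕ∞ :=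
  sSup {m : ℕ∞ | ∃ rs : List R, (rs.length : ℕ∞) = m ∧
    (∀ r ∈ rs, r ∈ IsLocalRing.maximalIdeal R) ∧ RingTheory.Sequence.IsRegular R rs}

/-- A commutative ring is Cohen-Macaulay if its localization at every maximal ideal
has depth equal to Krull dimension. -/
def IsCohenMacaulayRing (R : Type*) [CommRing R] : Prop :=
  ∀ (P : Ideal R) (hP : P.IsMaximal),
    letI := hP.isPrime
    (ringDepth (Localization.AtPrime P) : WithBot ℕ∞) = ringKrullDim (Localization.AtPrime P)

/-- The minimal number of generators of an ideal. -/
def mu {R : Type*} [CommRing R] (I : Ideal R) : ℕ :=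
  sInf {m : ℕ | ∃ s : Finset R, s.card = m ∧ Ideal.span (s : Set R) = I}


namespace Stmt14

variable {K : Type*} [Field K]

/-- Bundle a function into a finsupp exponent. -/
def E (a : Fin 4 → ℕ) : Fin 4 →₀ ℕ := Finsupp.equivFunOnFinite.symm a

lemma E_apply (a : Fin 4 → ℕ) (i : Fin 4) : E a i = a i := rfl

lemma E_inj : Function.Injective E := Finsupp.equivFunOnFinite.symm.injective

lemma E_coe (u : Fin 4 →₀ ℕ) : E ⇑u = u := Finsupp.equivFunOnFinite.symm_apply_apply u

lemma E_add (a b : Fin 4 → ℕ) : E (a + b) = E a + E b := by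
  ext i; rfl

def dg (a : Fin 4 → ℕ) : ℕ := a 0 + a 1 + a 2 + a 3

lemma degree_E (a : Fin 4 → ℕ) : (E a).degree = dg a := by
  rw [Finsupp.degree_apply]
  rw [Finset.sum_subset (Finset.subset_univ (E a).support)]
  · rw [Fin.sum_univ_four]; rfl
  · intro x _ hx
    simpa using (Finsupp.notMem_support_iff.mp hx)

variable {K : Type*} [Field K]

/-- basic monomial -/
def mon (K : Type*) [Field K] (a : Fin 4 → ℕ) : MvPolynomial (Fin 4) K := monomial (E a) 1

lemma mon_mul (a b : Fin 4 → ℕ) : mon K a * mon K b = mon K (a + b) := by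
  rw [mon, mon, mon, monomial_mul, one_mul, E_add]

lemma mon_ne_zero (a : Fin 4 → ℕ) : mon K a ≠ 0 := by
  simp [mon, monomial_eq_zero]

lemma mon_eq_prod (a : Fin 4 → ℕ) :
    mon K a = X 0 ^ a 0 * X 1 ^ a 1 * X 2 ^ a 2 * X 3 ^ a 3 := by
  have h : Finsupp.single (0 : Fin 4) (a 0) + Finsupp.single 1 (a 1)
      + Finsupp.single 2 (a 2) + Finsupp.single 3 (a 3) = E a := by
    ext i; fin_cases i <;> simp [E_apply, Finsupp.single_apply]
  simp only [X_pow_eq_monomial, monomial_mul, mul_one, h, mon]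

lemma mon_sub_ne_zero {a b : Fin 4 → ℕ} (h : a ≠ b) : mon K a - mon K b ≠ 0 := by
  intro hh
  rw [sub_eq_zero] at hh
  have := congrArg (coeff (E a)) hh
  rw [mon, mon, coeff_monomial, coeff_monomial, if_pos rfl,
    if_neg (fun hab => h (E_inj hab).symm)] at this
  exact one_ne_zero this

/-- weight of an exponent vector -/
def wt (n : Fin 4 → ℕ) (a : Fin 4 → ℕ) : ℕ := n 0 * a 0 + n 1 * a 1 + n 2 * a 2 + n 3 * a 3

lemma aeval_mon (n : Fin 4 → ℕ) (a : Fin 4 → ℕ) :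
    (MvPolynomial.aeval (fun i => (Polynomial.X : Polynomial K) ^ n i)) (mon K a)
      = Polynomial.X ^ (wt n a) := by
  rw [mon_eq_prod]
  simp only [map_mul, map_pow, aeval_X, ← pow_mul, ← pow_add]
  rfl

lemma mem_toricIdeal (n : Fin 4 → ℕ) {a b : Fin 4 → ℕ} (h : wt n a = wt n b) :
    mon K a - mon K b ∈ RingHom.ker
      (MvPolynomial.aeval (fun i => (Polynomial.X : Polynomial K) ^ n i) :
        MvPolynomial (Fin 4) K →ₐ[K] Polynomial K) := by
  rw [RingHom.mem_ker, map_sub, aeval_mon, aeval_mon, h, sub_self]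

lemma hc_mon (m : ℕ) (a : Fin 4 → ℕ) :
    homogeneousComponent m (mon K a) = if m = dg a then mon K a else 0 := by
  rw [mon]
  exact homogeneousComponent_of_mem
    ((mem_homogeneousSubmodule _ _).mpr (isHomogeneous_monomial _ (degree_E a)))


lemma star_mon_sub_lt {a b : Fin 4 → ℕ} (h : dg a < dg b) :
    star (mon K a - mon K b) = mon K a := by
  have hne : a ≠ b := fun hh => absurd (congrArg dg hh) (Nat.ne_of_lt h)
  have hcf : ∀ m, homogeneousComponent m (mon K a - mon K b)
      = (if m = dg a then mon K a else 0) - (if m = dg b then mon K b else 0) := by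
    intro m; rw [map_sub, hc_mon, hc_mon]
  have hda : homogeneousComponent (dg a) (mon K a - mon K b) = mon K a := by
    rw [hcf, if_pos rfl, if_neg (Nat.ne_of_lt h), sub_zero]
  have hmem : dg a ∈ {m : ℕ | homogeneousComponent m (mon K a - mon K b) ≠ 0} := by
    rw [Set.mem_setOf_eq, hda]; exact mon_ne_zero a
  have hlb : ∀ m ∈ {m : ℕ | homogeneousComponent m (mon K a - mon K b) ≠ 0}, dg a ≤ m := by
    intro m hm
    by_contra hlt
    push_neg at hlt
    apply hm
    rw [hcf, if_neg (Nat.ne_of_lt hlt), if_neg (Nat.ne_of_lt (hlt.trans h)), sub_zero]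
  have : sInf {m : ℕ | homogeneousComponent m (mon K a - mon K b) ≠ 0} = dg a :=
    le_antisymm (Nat.sInf_le hmem) (le_csInf ⟨dg a, hmem⟩ hlb)
  rw [_root_.star, this, hda]

lemma star_mon_sub_eq {a b : Fin 4 → ℕ} (hne : a ≠ b) (h : dg a = dg b) :
    star (mon K a - mon K b) = mon K a - mon K b := by
  have hcf : ∀ m, homogeneousComponent m (mon K a - mon K b)
      = (if m = dg a then mon K a else 0) - (if m = dg b then mon K b else 0) := by
    intro m; rw [map_sub, hc_mon, hc_mon]
  have hda : homogeneousComponent (dg a) (mon K a - mon K b) = mon K a - mon K b := by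
    rw [hcf, if_pos rfl, if_pos h]
  have hmem : dg a ∈ {m : ℕ | homogeneousComponent m (mon K a - mon K b) ≠ 0} := by
    rw [Set.mem_setOf_eq, hda]; exact mon_sub_ne_zero hne
  have hlb : ∀ m ∈ {m : ℕ | homogeneousComponent m (mon K a - mon K b) ≠ 0}, dg a ≤ m := by
    intro m hm
    by_contra hlt
    push_neg at hlt
    apply hm
    rw [hcf, if_neg (Nat.ne_of_lt hlt), if_neg (by omega), sub_zero]
  have : sInf {m : ℕ | homogeneousComponent m (mon K a - mon K b) ≠ 0} = dg a :=
    le_antisymm (Nat.sInf_le hmem) (le_csInf ⟨dg a, hmem⟩ hlb)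
  rw [_root_.star, this, hda]


-- the n-vector
def nv (c : ℕ) : Fin 4 → ℕ := ![3*c^2-4*c+2, 6*c^2+9*c+2, 4*c^2+5*c-3, 6*c^2+6*c-11]

-- S-set pieces
def mA (K : Type*) [Field K] (c : ℕ) : MvPolynomial (Fin 4) K := mon K ![0,c,0,0]
def mB (K : Type*) [Field K] : MvPolynomial (Fin 4) K := mon K ![0,1,0,1]
def mC (K : Type*) [Field K] (c : ℕ) : MvPolynomial (Fin 4) K := mon K ![0,0,3*c-2,0]
def gg (K : Type*) [Field K] (c : ℕ) : MvPolynomial (Fin 4) K :=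
  mon K ![0,0,0,c] - mon K ![1,c-1,0,0]
def PP (K : Type*) [Field K] (c i : ℕ) : MvPolynomial (Fin 4) K :=
  mon K ![0, c-(i+1), 3*i+1, 0]
def QQ (K : Type*) [Field K] (c i : ℕ) : MvPolynomial (Fin 4) K :=
  mon K ![0, 0, 3*i+1, c-(i+1)]

def Sset (K : Type*) [Field K] (c : ℕ) : Set (MvPolynomial (Fin 4) K) :=
  ({mA K c, mB K, gg K c} : Set (MvPolynomial (Fin 4) K))
    ∪ {q | ∃ i, i ≤ c - 2 ∧ q = PP K c i}
    ∪ {q | ∃ i, i ≤ c - 2 ∧ q = QQ K c i}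
    ∪ {mC K c}

-- conversion from the statement's description
lemma eA (c : ℕ) : (X 1 ^ c : MvPolynomial (Fin 4) K) = mA K c := by
  rw [mA, mon_eq_prod]; simp
lemma eB : (X 1 * X 3 : MvPolynomial (Fin 4) K) = mB K := by
  rw [mB, mon_eq_prod]; simp
lemma eC (c : ℕ) : (X 2 ^ (3*c-2) : MvPolynomial (Fin 4) K) = mC K c := by
  rw [mC, mon_eq_prod]; simp
lemma eG (c : ℕ) : (X 3 ^ c - X 0 * X 1 ^ (c-1) : MvPolynomial (Fin 4) K) = gg K c := by
  rw [gg, mon_eq_prod, mon_eq_prod]; simp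
lemma eP (c i : ℕ) : (X 1 ^ (c - (i+1)) * X 2 ^ (3*i+1) : MvPolynomial (Fin 4) K) = PP K c i := by
  rw [PP, mon_eq_prod]; simp
lemma eQ (c i : ℕ) : (X 2 ^ (3*i+1) * X 3 ^ (c - (i+1)) : MvPolynomial (Fin 4) K) = QQ K c i := by
  rw [QQ, mon_eq_prod]; simp

lemma S_conv (c : ℕ) :
    (({X 1 ^ c, X 1 * X 3, X 3 ^ c - X 0 * X 1 ^ (c - 1)} :
        Set (MvPolynomial (Fin 4) K))
      ∪ {q | ∃ i, i ≤ c - 2 ∧ q = X 1 ^ (c - (i + 1)) * X 2 ^ (3 * i + 1)}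
      ∪ {q | ∃ i, i ≤ c - 2 ∧ q = X 2 ^ (3 * i + 1) * X 3 ^ (c - (i + 1))}
      ∪ {X 2 ^ (3 * c - 2)}) = Sset K c := by
  rw [Sset]
  simp only [eG]
  simp only [eP]
  simp only [eQ]
  simp only [eB]
  simp only [eC]
  simp only [eA]

-- memberships
lemma mA_mem (c : ℕ) : mA K c ∈ Sset K c := by left; left; left; left; rfl
lemma mB_mem (c : ℕ) : mB K ∈ Sset K c := by left; left; left; right; left; rfl
lemma gg_mem (c : ℕ) : gg K c ∈ Sset K c := by left; left; left; right; right; rfl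
lemma PP_mem (c : ℕ) {i : ℕ} (h : i ≤ c - 2) : PP K c i ∈ Sset K c := by
  left; left; right; exact ⟨i, h, rfl⟩
lemma QQ_mem (c : ℕ) {i : ℕ} (h : i ≤ c - 2) : QQ K c i ∈ Sset K c := by
  left; right; exact ⟨i, h, rfl⟩
lemma mC_mem (c : ℕ) : mC K c ∈ Sset K c := by right; rfl

-- divisibility helper
lemma mon_mem_span_of_le {S : Set (MvPolynomial (Fin 4) K)} {m a : Fin 4 → ℕ}
    (hm : mon K m ∈ S) (h : ∀ i, m i ≤ a i) : mon K a ∈ Ideal.span S := by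
  have he : mon K (a - m) * mon K m = mon K a := by
    rw [mon_mul]; congr 1; funext i
    simp only [Pi.add_apply, Pi.sub_apply]
    have := h i
    omega
  rw [← he]
  exact Ideal.mul_mem_left _ _ (Ideal.subset_span hm)

-- the zero-region
def InZ (c : ℕ) (a : Fin 4 → ℕ) : Prop :=
  c ≤ a 1 ∨ (1 ≤ a 1 ∧ 1 ≤ a 3) ∨ 3*c-2 ≤ a 2
    ∨ (∃ i, i ≤ c-2 ∧ c-1-i ≤ a 1 ∧ 3*i+1 ≤ a 2)
    ∨ (∃ i, i ≤ c-2 ∧ 3*i+1 ≤ a 2 ∧ c-1-i ≤ a 3)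
    ∨ (a 1 = 0 ∧ a 2 = 0 ∧ c+1 ≤ a 3)

lemma mem_span_of_InZ {c : ℕ} (hc : 2 ≤ c) {a : Fin 4 → ℕ} (hZ : InZ c a) :
    mon K a ∈ Ideal.span (Sset K c) := by
  rcases hZ with h | ⟨h1, h3⟩ | h | ⟨i, hi, h1, h2⟩ | ⟨i, hi, h2, h3⟩ | ⟨h1, h2, h3⟩
  · exact mon_mem_span_of_le (mA_mem c) (by intro j; fin_cases j <;> simp_all <;> omega)
  · exact mon_mem_span_of_le (mB_mem c) (by intro j; fin_cases j <;> simp_all <;> omega)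
  · exact mon_mem_span_of_le (mC_mem c) (by intro j; fin_cases j <;> simp_all <;> omega)
  · exact mon_mem_span_of_le (PP_mem c hi) (by intro j; fin_cases j <;> simp_all <;> omega)
  · exact mon_mem_span_of_le (QQ_mem c hi) (by intro j; fin_cases j <;> simp_all <;> omega)
  · -- tail case : a = x1^{a0} x4^{a3}, a3 ≥ c+1
    have key : mon K a = mon K ![a 0, 0, 0, a 3 - c] * gg K c
        + mon K ![a 0 + 1, c-1, 0, a 3 - c] := by
      rw [gg, mul_sub, mon_mul, mon_mul]
      have e1 : (![a 0, 0, 0, a 3 - c] + ![0,0,0,c] : Fin 4 → ℕ) = a := by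
        funext j; fin_cases j <;> simp_all <;> omega
      have e2 : (![a 0, 0, 0, a 3 - c] + ![1,c-1,0,0] : Fin 4 → ℕ)
          = ![a 0 + 1, c-1, 0, a 3 - c] := by
        funext j; fin_cases j <;> simp_all <;> omega
      rw [e1, e2]; ring
    rw [key]
    refine Ideal.add_mem _ (Ideal.mul_mem_left _ _ (Ideal.subset_span (gg_mem c))) ?_
    exact mon_mem_span_of_le (mB_mem c) (by intro j; fin_cases j <;> simp_all <;> omega)


-- generating set of idealStar
def starGens (K : Type*) [Field K] (n : Fin 4 → ℕ) : Set (MvPolynomial (Fin 4) K) :=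
  {g | ∃ f ∈ toricIdeal K n, f ≠ 0 ∧ g = star f}

lemma wt_nv (c : ℕ) (a : Fin 4 → ℕ) : wt (nv c) a
    = (3*c^2-4*c+2) * a 0 + (6*c^2+9*c+2) * a 1 + (4*c^2+5*c-3) * a 2
      + (6*c^2+6*c-11) * a 3 := by
  simp [wt, nv]

lemma dg_vec (p q r s : ℕ) : dg ![p,q,r,s] = p + q + r + s := by simp [dg]

lemma wt_vec (c p q r s : ℕ) : wt (nv c) ![p,q,r,s]
    = (3*c^2-4*c+2) * p + (6*c^2+9*c+2) * q + (4*c^2+5*c-3) * r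
      + (6*c^2+6*c-11) * s := by
  rw [wt_nv]; simp

lemma cast_sub_facts (c : ℕ) (hc : 2 ≤ c) :
    4*c ≤ 3*c^2 ∧ 3 ≤ 4*c^2+5*c ∧ 11 ≤ 6*c^2+6*c :=
  ⟨by nlinarith, by nlinarith, by nlinarith⟩

lemma mon_mem_starGens {n : Fin 4 → ℕ} {a b : Fin 4 → ℕ}
    (hw : wt n a = wt n b) (hd : dg a < dg b) : mon K a ∈ starGens K n :=
  ⟨mon K a - mon K b, mem_toricIdeal n hw,
    mon_sub_ne_zero (fun h => absurd (congrArg dg h) (Nat.ne_of_lt hd)),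
    (star_mon_sub_lt hd).symm⟩

lemma Sset_subset_starGens {c : ℕ} (hc : 2 ≤ c) :
    Sset K c ⊆ starGens K (nv c) := by
  have h4c : 4*c ≤ 3*c^2 := (cast_sub_facts c hc).1
  have h3 : 3 ≤ 4*c^2+5*c := (cast_sub_facts c hc).2.1
  have h11 : 11 ≤ 6*c^2+6*c := (cast_sub_facts c hc).2.2
  intro q hq
  simp only [Sset, Set.mem_union, Set.mem_insert_iff, Set.mem_setOf_eq,
    Set.mem_singleton_iff] at hq
  obtain (((hq | hq | hq) | ⟨i, hi, rfl⟩) | ⟨i, hi, rfl⟩) | hq := hq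
  · -- mA : x2^c, partner x1^{2c+3} x3^2
    subst hq
    refine mon_mem_starGens (a := ![0,c,0,0]) (b := ![2*c+3,0,2,0]) ?_ ?_
    · rw [wt_vec, wt_vec]; zify [h4c, h3, h11]; ring
    · rw [dg_vec, dg_vec]; omega
  · -- mB : x2 x4, partner x3^3
    subst hq
    refine mon_mem_starGens (a := ![0,1,0,1]) (b := ![0,0,3,0]) ?_ ?_
    · rw [wt_vec, wt_vec]; zify [h4c, h3, h11]; ring
    · rw [dg_vec, dg_vec]; omega
  · -- gg : x4^c - x1 x2^{c-1}
    subst hq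
    refine ⟨gg K c, ?_, ?_, ?_⟩
    · exact mem_toricIdeal (nv c)
        (by rw [wt_vec, wt_vec]; zify [h4c, h3, h11, show 1 ≤ c by omega]; ring)
    · exact mon_sub_ne_zero (by
        intro h
        have := congrFun h 0
        simp at this)
    · rw [gg, star_mon_sub_eq (by intro h; have := congrFun h 0; simp at this)
        (by rw [dg_vec, dg_vec]; omega)]
  · -- PP i, partner x1^{2c+3} x4^{i+1}
    refine mon_mem_starGens (a := ![0,c-(i+1),3*i+1,0]) (b := ![2*c+3,0,0,i+1]) ?_ ?_
    · rw [wt_vec, wt_vec]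
      zify [h4c, h3, h11, show i+1 ≤ c by omega]
      ring
    · rw [dg_vec, dg_vec]; omega
  · -- QQ i, partner x1^{2c+4} x2^i
    refine mon_mem_starGens (a := ![0,0,3*i+1,c-(i+1)]) (b := ![2*c+4,i,0,0]) ?_ ?_
    · rw [wt_vec, wt_vec]
      zify [h4c, h3, h11, show i+1 ≤ c by omega]
      ring
    · rw [dg_vec, dg_vec]; omega
  · -- mC : x3^{3c-2}, partner x1^{2c+4} x2^{c-1}
    subst hq
    refine mon_mem_starGens (a := ![0,0,3*c-2,0]) (b := ![2*c+4,c-1,0,0]) ?_ ?_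
    · rw [wt_vec, wt_vec]
      zify [h4c, h3, h11, show 1 ≤ c by omega, show 2 ≤ 3*c by omega]
      ring
    · rw [dg_vec, dg_vec]; omega


lemma coprime_N1_N4 {c : ℕ} (hc : 2 ≤ c) (h227 : ¬ (227 ∣ c + 80)) :
    IsCoprime (3*(c:ℤ)^2-4*c+2) (6*(c:ℤ)^2+6*c-11) := by
  rw [Int.isCoprime_iff_gcd_eq_one]
  set N1 : ℤ := 3*(c:ℤ)^2-4*c+2 with hN1
  set N4 : ℤ := 6*(c:ℤ)^2+6*c-11 with hN4
  by_contra hg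
  have hg1 : (Int.gcd N1 N4 : ℤ) ∣ N1 := Int.gcd_dvd_left _ _
  have hg4 : (Int.gcd N1 N4 : ℤ) ∣ N4 := Int.gcd_dvd_right _ _
  have h227' : (Int.gcd N1 N4 : ℤ) ∣ 227 := by
    have : (84*(c:ℤ)+174)*N1 - (42*(c:ℤ)-11)*N4 = 227 := by rw [hN1, hN4]; ring
    calc (Int.gcd N1 N4 : ℤ) ∣ (84*(c:ℤ)+174)*N1 - (42*(c:ℤ)-11)*N4 :=
          dvd_sub (hg1.mul_left _) (hg4.mul_left _)
      _ = 227 := this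
  have hdvd : Int.gcd N1 N4 ∣ 227 := by
    have := Int.natCast_dvd_natCast.mp (by exact_mod_cast h227')
    exact this
  have hp : Nat.Prime 227 := by norm_num
  rcases Nat.Prime.eq_one_or_self_of_dvd hp _ hdvd with h1 | h1
  · exact hg h1
  · -- gcd = 227, derive 227 ∣ c + 80
    rw [h1] at hg1 hg4
    have hd : (227:ℤ) ∣ N4 - 2*N1 := dvd_sub hg4 (hg1.mul_left 2)
    have he : N4 - 2*N1 = 14*(c:ℤ) - 15 := by rw [hN1, hN4]; ring
    rw [he] at hd
    have : (227:ℤ) ∣ 14*((c:ℤ)+80) := by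
      have : (14:ℤ)*((c:ℤ)+80) = (14*(c:ℤ) - 15) + 5*227 := by ring
      rw [this]
      exact dvd_add hd ⟨5, by ring⟩
    have h80 : (227:ℤ) ∣ ((c:ℤ)+80) := by omega
    exact h227 (by exact_mod_cast h80)

lemma lattice_decomp {c : ℕ} (hc : 2 ≤ c) (h227 : ¬ (227 ∣ c + 80)) (Z1 Z2 Z3 Z4 : ℤ)
    (hz : (3*(c:ℤ)^2-4*c+2)*Z1 + (6*(c:ℤ)^2+9*c+2)*Z2 + (4*(c:ℤ)^2+5*c-3)*Z3
      + (6*(c:ℤ)^2+6*c-11)*Z4 = 0) :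
    ∃ α β γ : ℤ, Z2 = ((c:ℤ)-1)*α + β ∧ Z3 = -3*β - γ ∧ Z4 = -(c:ℤ)*α + β - ((c:ℤ)-1)*γ
      ∧ Z1 = α + (2*(c:ℤ)+4)*γ := by
  have hco := coprime_N1_N4 hc h227
  set num : ℤ := (3*(c:ℤ)-2)*Z2 + ((c:ℤ)-1)*Z3 - Z4 with hnum
  have hmul : (6*(c:ℤ)^2+6*c-11) * num
      = (3*(c:ℤ)^2-4*c+2) * (Z1 + (6*(c:ℤ)+12)*Z2 + (2*(c:ℤ)+4)*Z3) := by
    rw [hnum]; linear_combination -hz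
  have hdvd : (3*(c:ℤ)^2-4*c+2) ∣ num := by
    refine hco.dvd_of_dvd_mul_left ?_
    exact ⟨Z1 + (6*(c:ℤ)+12)*Z2 + (2*(c:ℤ)+4)*Z3, by linear_combination hmul⟩
  obtain ⟨α, hα⟩ := hdvd
  refine ⟨α, Z2 - ((c:ℤ)-1)*α, -Z3 - 3*(Z2 - ((c:ℤ)-1)*α), by ring, by ring, ?_, ?_⟩
  · linear_combination -hα
  · have hN1 : (3*(c:ℤ)^2-4*c+2) ≠ 0 := by
      have : (2:ℤ) ≤ (c:ℤ) := by exact_mod_cast hc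
      nlinarith
    have h0 : (3*(c:ℤ)^2-4*c+2) * (Z1 - α - (2*(c:ℤ)+4)*(-Z3 - 3*(Z2 - ((c:ℤ)-1)*α))) = 0 := by
      linear_combination -hmul + (6*(c:ℤ)^2+6*c-11) * hα
    have := mul_eq_zero.mp h0
    rcases this with h | h
    · exact absurd h hN1
    · linarith [h]

/-- helpers -/
lemma hneg {C x : ℤ} (hC : 1 ≤ C) (h : C*x ≤ -1) : x ≤ -1 := by
  by_contra hx
  push_neg at hx
  have h0 : 0 ≤ x := by omega
  nlinarith
lemma hpos {C x : ℤ} (hC : 1 ≤ C) (h : 1 ≤ C*x) : 1 ≤ x := by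
  by_contra hx
  push_neg at hx
  have h0 : x ≤ 0 := by omega
  nlinarith
lemma hmul_ge {C x : ℤ} (hC : 0 ≤ C) (h : 1 ≤ x) : C ≤ C*x := by nlinarith
lemma hmul_le {C x : ℤ} (hC : 0 ≤ C) (h : x ≤ -1) : C*x ≤ -C := by nlinarith

/-- the integer core of the maximal-degree analysis -/
lemma ML_int (C a1 a2 a3 a4 b1 b2 b3 b4 α β γ : ℤ)
    (hC : 2 ≤ C)
    (ha1 : 0 ≤ a1) (ha2 : 0 ≤ a2) (ha3 : 0 ≤ a3) (ha4 : 0 ≤ a4)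
    (hb1 : 0 ≤ b1) (hb2 : 0 ≤ b2) (hb3 : 0 ≤ b3) (hb4 : 0 ≤ b4)
    (u1 : a2 + 1 ≤ C) (u2 : a2 = 0 ∨ a4 = 0) (u3 : a3 + 3 ≤ 3*C)
    (u4 : ∀ i : ℤ, 0 ≤ i → i ≤ C-2 → 3*i+1 ≤ a3 → a2 + i + 2 ≤ C)
    (u5 : ∀ i : ℤ, 0 ≤ i → i ≤ C-2 → 3*i+1 ≤ a3 → a4 + i + 2 ≤ C)
    (u6 : a4 ≤ C)
    (E1 : b1 - a1 = α + (2*C+4)*γ) (E2 : b2 - a2 = (C-1)*α + β)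
    (E3 : b3 - a3 = -3*β - γ) (E4 : b4 - a4 = -C*α + β - (C-1)*γ)
    (hne : ¬(α = 0 ∧ β = 0 ∧ γ = 0))
    (hge : a1+a2+a3+a4 ≤ b1+b2+b3+b4) :
    (β = 0 ∧ γ = 0) ∧ ((α = 1 ∧ a2 = 0 ∧ a3 = 0 ∧ a4 = C)
      ∨ (α = -1 ∧ a2 = C-1 ∧ a3 = 0 ∧ a4 = 0 ∧ 1 ≤ a1)) := by
  have hC1 : (1:ℤ) ≤ C := by omega
  have hC0 : (0:ℤ) ≤ C := by omega
  have hC1' : (1:ℤ) ≤ C - 1 := by omega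
  have hC0' : (0:ℤ) ≤ C - 1 := by omega
  have hsum : 0 ≤ (C+4)*γ - β := by linarith [E1, E2, E3, E4, hge]
  have hγ0 : γ ≤ 0 := by
    by_contra hγ
    push_neg at hγ
    have hγ1 : 1 ≤ γ := hγ
    have prod1 : C - 1 ≤ (C-1)*γ := hmul_ge hC0' hγ1
    rcases le_or_gt 1 β with hβ1 | hβ1
    · have hA3 : 3*β + γ ≤ a3 := by linarith [E3, hb3]
      have hβc : β ≤ C - 2 := by omega
      have h2 := u4 β (by omega) hβc (by omega)
      have h4 := u5 β (by omega) hβc (by omega)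
      have hCα : C*α ≤ -1 := by linarith [E4, hb4]
      have hα : α ≤ -1 := hneg hC1 hCα
      have prod2 : (C-1)*α ≤ -(C-1) := by
        have := hmul_le hC0' hα; linarith
      linarith [E2, hb2]
    · have hβ0 : β ≤ 0 := by omega
      rcases le_or_gt 1 a3 with hA3 | hA3
      · have h2 := u4 0 (by omega) (by omega) (by omega)
        have h4 := u5 0 (by omega) (by omega) (by omega)
        have hCα : C*α ≤ -1 := by linarith [E4, hb4]
        have hα : α ≤ -1 := hneg hC1 hCα
        have prod2 : (C-1)*α ≤ -(C-1) := by
          have := hmul_le hC0' hα; linarith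
        linarith [E2, hb2]
      · have ha3' : a3 = 0 := by omega
        have hβ1 : β ≤ -1 := by
          have : 0 ≤ -3*β - γ + a3 := by linarith [E3, hb3]
          omega
        rcases u2 with h20 | h40
        · have hCα1 : 1 ≤ (C-1)*α := by linarith [E2, hb2]
          have hα : 1 ≤ α := hpos hC1' hCα1
          have prod3 : C ≤ C*α := hmul_ge hC0 hα
          linarith [E4, hb4]
        · have hCα : C*α ≤ -C := by linarith [E4, hb4]
          have hα : α ≤ -1 := hneg hC1 (by linarith)
          have prod2 : (C-1)*α ≤ -(C-1) := by
            have := hmul_le hC0' hα; linarith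
          linarith [E2, hb2]
  have hγ0' : 0 ≤ γ := by
    by_contra hγ
    push_neg at hγ
    have hγ1 : γ ≤ -1 := by omega
    have prod4 : C*γ ≤ -C := hmul_le hC0 hγ1
    have hβ : β ≤ -C - 4 := by nlinarith
    have hCα1 : 5 ≤ (C-1)*α := by linarith [E2, hb2]
    have hα : 1 ≤ α := hpos hC1' (by linarith)
    have prod3 : C ≤ C*α := hmul_ge hC0 hα
    linarith [E4, hb4]
  have hγ : γ = 0 := le_antisymm hγ0 hγ0'
  subst hγ
  have hβ0 : β ≤ 0 := by linarith [hsum]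
  have hβ : β = 0 := by
    rcases eq_or_lt_of_le hβ0 with h | h
    · exact h
    · exfalso
      have hβ1 : β ≤ -1 := by omega
      rcases u2 with h20 | h40
      · have hCα1 : 1 ≤ (C-1)*α := by linarith [E2, hb2]
        have hα : 1 ≤ α := hpos hC1' hCα1
        have prod3 : C ≤ C*α := hmul_ge hC0 hα
        linarith [E4, hb4]
      · have hCα : C*α ≤ -1 := by linarith [E4, hb4]
        have hα : α ≤ -1 := hneg hC1 hCα
        have prod2 : (C-1)*α ≤ -(C-1) := by
          have := hmul_le hC0' hα; linarith
        linarith [E2, hb2]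
  subst hβ
  refine ⟨⟨rfl, rfl⟩, ?_⟩
  have hαne : α ≠ 0 := fun h => hne ⟨h, rfl, rfl⟩
  rcases lt_or_gt_of_ne hαne with hαn | hαp
  · right
    have hα1 : α ≤ -1 := by omega
    have hα : α = -1 := by
      by_contra h
      have hα2 : α ≤ -2 := by omega
      have : (C-1)*α ≤ -2*(C-1) := by nlinarith
      linarith [E2, hb2, u1]
    subst hα
    have hA2 : a2 = C - 1 := by
      have h1 : b2 - a2 = -(C-1) := by linarith [E2]
      omega
    have hA4 : a4 = 0 := by
      rcases u2 with h | h
      · exfalso; omega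
      · exact h
    have hA3 : a3 = 0 := by
      by_contra h
      have := u4 0 (by omega) (by omega) (by omega)
      omega
    refine ⟨rfl, hA2, hA3, hA4, ?_⟩
    have h1 : b1 - a1 = -1 := by linarith [E1]
    omega
  · left
    have hα1 : 1 ≤ α := by omega
    have prod3 : C ≤ C*α := hmul_ge hC0 hα1
    have hCα : C*α ≤ a4 := by linarith [E4, hb4]
    have hα : α = 1 := by
      by_contra h
      have hα2 : 2 ≤ α := by omega
      have : 2*C ≤ C*α := by nlinarith
      linarith
    subst hα
    have hA4 : a4 = C := by linarith
    have hA2 : a2 = 0 := by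
      rcases u2 with h | h
      · exact h
      · exfalso; omega
    have hA3 : a3 = 0 := by
      by_contra h
      have := u5 0 (by omega) (by omega) (by omega)
      omega
    exact ⟨rfl, hA2, hA3, hA4⟩


lemma unpack_notInZ {c : ℕ} (hc : 2 ≤ c) {a : Fin 4 → ℕ} (h : ¬ InZ c a) :
    a 1 + 1 ≤ c ∧ (a 1 = 0 ∨ a 3 = 0) ∧ a 2 + 3 ≤ 3*c
    ∧ (∀ i, i ≤ c-2 → 3*i+1 ≤ a 2 → a 1 + i + 2 ≤ c)
    ∧ (∀ i, i ≤ c-2 → 3*i+1 ≤ a 2 → a 3 + i + 2 ≤ c)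
    ∧ a 3 ≤ c := by
  rw [InZ] at h
  push_neg at h
  obtain ⟨h1, h2, h3, h4, h5, h6⟩ := h
  refine ⟨by omega, by omega, by omega, ?_, ?_, ?_⟩
  · intro i hi h3i
    have := h4 i
    omega
  · intro i hi h3i
    have := h5 i
    omega
  · by_contra hct
    push_neg at hct
    rcases Nat.eq_zero_or_pos (a 1) with e1 | e1
    · rcases Nat.eq_zero_or_pos (a 2) with e2 | e2
      · exact absurd (h6 e1 e2) (by omega)
      · have := h5 0
        omega
    · have := h2 e1
      omega

lemma cast_wt_eq {c : ℕ} (hc : 2 ≤ c) {a b : Fin 4 → ℕ}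
    (hwt : wt (nv c) a = wt (nv c) b) :
    (3*(c:ℤ)^2-4*c+2)*((b 0:ℤ) - a 0) + (6*(c:ℤ)^2+9*c+2)*((b 1:ℤ) - a 1)
      + (4*(c:ℤ)^2+5*c-3)*((b 2:ℤ) - a 2) + (6*(c:ℤ)^2+6*c-11)*((b 3:ℤ) - a 3) = 0 := by
  have h4c : 4*c ≤ 3*c^2 := by nlinarith
  have h3 : 3 ≤ 4*c^2+5*c := by nlinarith
  have h11 : 11 ≤ 6*c^2+6*c := by nlinarith
  rw [wt_nv, wt_nv] at hwt
  zify [h4c, h3, h11] at hwt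
  linarith

/-- Lemma A -/
lemma lemA {c : ℕ} (hc : 2 ≤ c) (h227 : ¬ (227 ∣ c + 80)) {a b : Fin 4 → ℕ}
    (hwt : wt (nv c) a = wt (nv c) b) (hdg : dg a < dg b) :
    mon K a ∈ Ideal.span (Sset K c) := by
  by_cases hZ : InZ c a
  · exact mem_span_of_InZ hc hZ
  exfalso
  obtain ⟨v1, v2, v3, v4, v5, v6⟩ := unpack_notInZ hc hZ
  obtain ⟨α, β, γ, E2, E3, E4, E1⟩ := lattice_decomp hc h227 _ _ _ _ (cast_wt_eq hc hwt)
  simp only [dg] at hdg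
  have hML := ML_int (c:ℤ) (a 0) (a 1) (a 2) (a 3) (b 0) (b 1) (b 2) (b 3) α β γ
    (by exact_mod_cast hc)
    (by positivity) (by positivity) (by positivity) (by positivity)
    (by positivity) (by positivity) (by positivity) (by positivity)
    (by exact_mod_cast v1) (by rcases v2 with h | h; exacts [Or.inl (by exact_mod_cast h), Or.inr (by exact_mod_cast h)])
    (by exact_mod_cast v3)
    (by intro i h0 hic h3i
        have := v4 i.toNat (by omega) (by omega)
        omega)
    (by intro i h0 hic h3i
        have := v5 i.toNat (by omega) (by omega)
        omega)
    (by exact_mod_cast v6)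
    E1 E2 E3 E4
    (by rintro ⟨rfl, rfl, rfl⟩
        simp only [mul_zero, add_zero, zero_sub, neg_zero, zero_mul, sub_zero, mul_zero] at E1 E2 E3 E4
        omega)
    (by omega)
  obtain ⟨⟨hβ, hγ⟩, hsp | hsp⟩ := hML
  · obtain ⟨hα, _, _, _⟩ := hsp
    simp only [hα, hβ, hγ] at E1 E2 E3 E4
    omega
  · obtain ⟨hα, _, _, _, _⟩ := hsp
    simp only [hα, hβ, hγ] at E1 E2 E3 E4
    omega

lemma lemB_aux {c : ℕ} (hc : 2 ≤ c) (h227 : ¬ (227 ∣ c + 80)) {a b : Fin 4 → ℕ}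
    (hZ : ¬ InZ c a) (hwt : wt (nv c) a = wt (nv c) b) (hdg : dg a = dg b) (hne : a ≠ b) :
    mon K a - mon K b ∈ Ideal.span (Sset K c) := by
  obtain ⟨v1, v2, v3, v4, v5, v6⟩ := unpack_notInZ hc hZ
  obtain ⟨α, β, γ, E2, E3, E4, E1⟩ := lattice_decomp hc h227 _ _ _ _ (cast_wt_eq hc hwt)
  simp only [dg] at hdg
  have hML := ML_int (c:ℤ) (a 0) (a 1) (a 2) (a 3) (b 0) (b 1) (b 2) (b 3) α β γ
    (by exact_mod_cast hc)
    (by positivity) (by positivity) (by positivity) (by positivity)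
    (by positivity) (by positivity) (by positivity) (by positivity)
    (by exact_mod_cast v1) (by rcases v2 with h | h; exacts [Or.inl (by exact_mod_cast h), Or.inr (by exact_mod_cast h)])
    (by exact_mod_cast v3)
    (by intro i h0 hic h3i
        have := v4 i.toNat (by omega) (by omega)
        omega)
    (by intro i h0 hic h3i
        have := v5 i.toNat (by omega) (by omega)
        omega)
    (by exact_mod_cast v6)
    E1 E2 E3 E4
    (by rintro ⟨rfl, rfl, rfl⟩
        simp only [mul_zero, add_zero, zero_sub, neg_zero, zero_mul, sub_zero, mul_zero] at E1 E2 E3 E4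
        apply hne
        have e0 : a 0 = b 0 := by omega
        have e1 : a 1 = b 1 := by omega
        have e2 : a 2 = b 2 := by omega
        have e3 : a 3 = b 3 := by omega
        funext i
        fin_cases i
        exacts [e0, e1, e2, e3])
    (by omega)
  obtain ⟨⟨hβ, hγ⟩, hsp | hsp⟩ := hML
  · -- a = (a0, 0, 0, c), b = (a0+1, c-1, 0, 0)
    obtain ⟨hα, hA2, hA3, hA4⟩ := hsp
    simp only [hα, hβ, hγ] at E1 E2 E3 E4
    have e1 : a 1 = 0 := by omega
    have e2 : a 2 = 0 := by omega
    have e3 : a 3 = c := by omega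
    have f0 : b 0 = a 0 + 1 := by omega
    have f1 : b 1 = c - 1 := by omega
    have f2 : b 2 = 0 := by omega
    have f3 : b 3 = 0 := by omega
    have key : mon K a - mon K b = mon K ![a 0, 0, 0, 0] * gg K c := by
      rw [gg, mul_sub, mon_mul, mon_mul]
      have ea : (![a 0,0,0,0] + ![0,0,0,c] : Fin 4 → ℕ) = a := by
        funext j; fin_cases j <;> simp <;> omega
      have eb : (![a 0,0,0,0] + ![1,c-1,0,0] : Fin 4 → ℕ) = b := by
        funext j; fin_cases j <;> simp <;> omega
      rw [ea, eb]
    rw [key]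
    exact Ideal.mul_mem_left _ _ (Ideal.subset_span (gg_mem c))
  · -- a = (a0, c-1, 0, 0), a0 ≥ 1, b = (a0-1, 0, 0, c)
    obtain ⟨hα, hA2, hA3, hA4, hA1⟩ := hsp
    simp only [hα, hβ, hγ] at E1 E2 E3 E4
    have e1 : a 1 = c - 1 := by omega
    have e2 : a 2 = 0 := by omega
    have e3 : a 3 = 0 := by omega
    have e0 : 1 ≤ a 0 := by omega
    have f0 : b 0 = a 0 - 1 := by omega
    have f1 : b 1 = 0 := by omega
    have f2 : b 2 = 0 := by omega
    have f3 : b 3 = c := by omega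
    have key : mon K a - mon K b = -(mon K ![a 0 - 1, 0, 0, 0] * gg K c) := by
      rw [gg, mul_sub, mon_mul, mon_mul]
      have ea : (![a 0 - 1,0,0,0] + ![0,0,0,c] : Fin 4 → ℕ) = b := by
        funext j; fin_cases j <;> simp <;> omega
      have eb : (![a 0 - 1,0,0,0] + ![1,c-1,0,0] : Fin 4 → ℕ) = a := by
        funext j; fin_cases j <;> simp <;> omega
      rw [ea, eb]; ring
    rw [key]
    exact neg_mem (Ideal.mul_mem_left _ _ (Ideal.subset_span (gg_mem c)))

/-- Lemma B -/
lemma lemB {c : ℕ} (hc : 2 ≤ c) (h227 : ¬ (227 ∣ c + 80)) {a b : Fin 4 → ℕ}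
    (hwt : wt (nv c) a = wt (nv c) b) (hdg : dg a = dg b) :
    mon K a - mon K b ∈ Ideal.span (Sset K c) := by
  by_cases hab : a = b
  · rw [hab, sub_self]; exact Ideal.zero_mem _
  by_cases hZa : InZ c a
  · by_cases hZb : InZ c b
    · exact sub_mem (mem_span_of_InZ hc hZa) (mem_span_of_InZ hc hZb)
    · have h := lemB_aux (K := K) hc h227 hZb hwt.symm hdg.symm (Ne.symm hab)
      have : mon K a - mon K b = -(mon K b - mon K a) := by ring
      rw [this]
      exact neg_mem h
  · exact lemB_aux hc h227 hZa hwt hdg hab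


lemma dg_coe (u : Fin 4 →₀ ℕ) : dg ⇑u = u.degree := by
  rw [← degree_E ⇑u, E_coe]

lemma C_mul_mon (r : K) (u : Fin 4 →₀ ℕ) : C r * mon K ⇑u = monomial u r := by
  rw [mon, E_coe, C_mul_monomial, mul_one]

lemma coeff_eq_zero_of_low {f : MvPolynomial (Fin 4) K} {d : ℕ}
    (hlow : ∀ e < d, homogeneousComponent e f = 0) {u : Fin 4 →₀ ℕ} (hu : u.degree < d) :
    coeff u f = 0 := by
  have h1 := hlow u.degree hu
  have h2 : coeff u (homogeneousComponent u.degree f) = coeff u f := by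
    simp [coeff_homogeneousComponent]
  rw [h1] at h2
  simpa using h2.symm

lemma class_sum_zero {n : Fin 4 → ℕ} {f : MvPolynomial (Fin 4) K}
    (hf : f ∈ toricIdeal K n) (v : ℕ) :
    ∑ u ∈ f.support.filter (fun u : Fin 4 →₀ ℕ => wt n ⇑u = v), coeff u f = 0 := by
  have h0 : (MvPolynomial.aeval (fun i => (Polynomial.X : Polynomial K) ^ n i)) f = 0 := hf
  have hs : (MvPolynomial.aeval (fun i => (Polynomial.X : Polynomial K) ^ n i)) f
      = ∑ u ∈ f.support, Polynomial.C (coeff u f) * Polynomial.X ^ ((fun w : Fin 4 →₀ ℕ => wt n ⇑w) u) := by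
    conv_lhs => rw [f.as_sum]
    rw [map_sum]
    refine Finset.sum_congr rfl fun u _ => ?_
    rw [← C_mul_mon (coeff u f) u, map_mul, aeval_mon, aeval_C]
    rfl
  have hcoeff := congrArg (fun p => Polynomial.coeff p v) (hs.symm.trans h0)
  simp only [Polynomial.finset_sum_coeff, Polynomial.coeff_C_mul, Polynomial.coeff_X_pow,
    Polynomial.coeff_zero] at hcoeff
  have hce : (∑ u ∈ f.support, if wt n ⇑u = v then coeff u f else 0)
      = ∑ x ∈ f.support, coeff x f * if v = wt n ⇑x then 1 else 0 := by
    refine Finset.sum_congr rfl fun u _ => ?_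
    by_cases h : wt n ⇑u = v
    · rw [if_pos h, if_pos h.symm, mul_one]
    · rw [if_neg h, if_neg (fun hh => h hh.symm), mul_zero]
  rw [Finset.sum_filter, hce, hcoeff]

lemma hc_mem_span {c : ℕ} (hc : 2 ≤ c) (h227 : ¬ (227 ∣ c + 80))
    {f : MvPolynomial (Fin 4) K} (hf : f ∈ toricIdeal K (nv c)) (d : ℕ)
    (hlow : ∀ e < d, homogeneousComponent e f = 0) :
    homogeneousComponent d f ∈ Ideal.span (Sset K c) := by
  rw [homogeneousComponent_apply]
  set W : (Fin 4 →₀ ℕ) → ℕ := fun u => wt (nv c) ⇑u with hW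
  set T := f.support.filter (fun u => u.degree = d) with hT
  rw [← Finset.sum_fiberwise_of_maps_to (g := W) (t := T.image W)
    (fun x hx => Finset.mem_image_of_mem _ hx) (fun u => monomial u (coeff u f))]
  apply Ideal.sum_mem
  intro v hv
  obtain ⟨u0, hu0T, hu0v⟩ := Finset.mem_image.mp hv
  by_cases hcase : ∃ b0 ∈ f.support, W b0 = v ∧ d < b0.degree
  · -- lemma A applies to every monomial in the fiber
    obtain ⟨b0, hb0s, hb0v, hb0d⟩ := hcase
    apply Ideal.sum_mem
    intro u hu
    rw [Finset.mem_filter, hT, Finset.mem_filter] at hu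
    obtain ⟨⟨hus, hud⟩, huv⟩ := hu
    rw [← C_mul_mon (coeff u f) u]
    refine Ideal.mul_mem_left _ _ (lemA hc h227 (b := ⇑b0) ?_ ?_)
    · show W u = W b0; rw [huv, hb0v]
    · rw [dg_coe, dg_coe, hud]; exact hb0d
  · -- all fiber members have degree d; class sum is zero, use lemma B
    push_neg at hcase
    have hfib : T.filter (fun u => W u = v) = f.support.filter (fun u => W u = v) := by
      ext u
      simp only [Finset.mem_filter, hT]
      constructor
      · rintro ⟨⟨h1, h2⟩, h3⟩; exact ⟨h1, h3⟩
      · rintro ⟨h1, h2⟩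
        refine ⟨⟨h1, ?_⟩, h2⟩
        have hle := hcase u h1 h2
        have hge : ¬ u.degree < d := fun hlt =>
          absurd (coeff_eq_zero_of_low hlow hlt) (mem_support_iff.mp h1)
        omega
    have hu0 : u0 ∈ f.support.filter (fun u => W u = v) := by
      rw [← hfib, Finset.mem_filter]; exact ⟨hu0T, hu0v⟩
    have hu0d : u0.degree = d := by
      rw [hT, Finset.mem_filter] at hu0T; exact hu0T.2
    have hsum : ∑ u ∈ f.support.filter (fun u => W u = v), coeff u f = 0 :=
      class_sum_zero hf v
    rw [hfib]
    have hexp : ∑ u ∈ f.support.filter (fun u => W u = v), monomial u (coeff u f)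
        = ∑ u ∈ f.support.filter (fun u => W u = v),
            C (coeff u f) * (mon K ⇑u - mon K ⇑u0) := by
      rw [Finset.sum_congr rfl (fun u _ => mul_sub (C (coeff u f)) (mon K ⇑u) (mon K ⇑u0)),
        Finset.sum_sub_distrib]
      rw [← Finset.sum_mul, ← map_sum]
      rw [hsum, map_zero, zero_mul, sub_zero]
      exact Finset.sum_congr rfl fun u _ => (C_mul_mon _ _).symm
    rw [hexp]
    apply Ideal.sum_mem
    intro u hu
    rw [Finset.mem_filter] at hu
    refine Ideal.mul_mem_left _ _ (lemB hc h227 ?_ ?_)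
    · show W u = W u0; rw [hu.2, hu0v]
    · rw [dg_coe, dg_coe, hu0d]
      have h1 := hcase u hu.1 hu.2
      have h2 : ¬ u.degree < d := fun hlt =>
        absurd (coeff_eq_zero_of_low hlow hlt) (mem_support_iff.mp hu.1)
      omega
  
lemma idealStar_le_span {c : ℕ} (hc : 2 ≤ c) (h227 : ¬ (227 ∣ c + 80)) :
    idealStar (toricIdeal K (nv c)) ≤ Ideal.span (Sset K c) := by
  rw [idealStar]
  apply Ideal.span_le.mpr
  rintro q ⟨f, hf, hf0, rfl⟩
  rw [_root_.star]
  refine hc_mem_span hc h227 hf _ (fun e he => ?_)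
  by_contra hne0
  have hmem : e ∈ {m : ℕ | homogeneousComponent m f ≠ 0} := hne0
  have := Nat.sInf_le hmem
  omega


lemma coeff_mon (u : Fin 4 →₀ ℕ) (w : Fin 4 → ℕ) :
    coeff u (mon K w) = if E w = u then 1 else 0 := coeff_monomial u (E w) 1

/-- The ideal of polynomials all of whose coefficients on the divisors of `m` vanish. -/
def Vm (K : Type*) [Field K] (m : Fin 4 →₀ ℕ) : Ideal (MvPolynomial (Fin 4) K) where
  carrier := {f | ∀ u : Fin 4 →₀ ℕ, u ≤ m → coeff u f = 0}
  add_mem' := by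
    intro a b ha hb u hu
    rw [coeff_add, ha u hu, hb u hu, add_zero]
  zero_mem' := by intro u hu; simp
  smul_mem' := by
    intro r f hf u hu
    rw [smul_eq_mul, coeff_mul]
    apply Finset.sum_eq_zero
    rintro ⟨u1, u2⟩ hmem
    rw [Finset.HasAntidiagonal.mem_antidiagonal] at hmem
    have h2 : u2 ≤ u := hmem ▸ le_add_self
    rw [hf u2 (h2.trans hu), mul_zero]

lemma mem_Vm_iff (m : Fin 4 →₀ ℕ) (f : MvPolynomial (Fin 4) K) :
    f ∈ Vm K m ↔ ∀ u : Fin 4 →₀ ℕ, u ≤ m → coeff u f = 0 := Iff.rfl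

lemma E_le_E_iff (w m : Fin 4 → ℕ) : E w ≤ E m ↔ ∀ i, w i ≤ m i := by
  rw [Finsupp.le_def]
  exact Iff.rfl

lemma mon_mem_Vm {w m : Fin 4 → ℕ} (h : ¬ (∀ i, w i ≤ m i)) : mon K w ∈ Vm K (E m) := by
  intro u hu
  rw [coeff_mon]
  rw [if_neg]
  intro he
  apply h
  rw [← E_le_E_iff]
  rw [he]
  exact hu

lemma mon_not_mem_Vm (m : Fin 4 → ℕ) : mon K m ∉ Vm K (E m) := by
  intro h
  have := h (E m) le_rfl
  rw [coeff_mon, if_pos rfl] at this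
  exact one_ne_zero this

-- q ∉ span (S \ {q}) for each q in S
lemma not_mem_span_diff {c : ℕ} (hc : 2 ≤ c) {q : MvPolynomial (Fin 4) K}
    (hq : q ∈ Sset K c) : q ∉ Ideal.span (Sset K c \ {q}) := by
  simp only [Sset, Set.mem_union, Set.mem_insert_iff, Set.mem_setOf_eq,
    Set.mem_singleton_iff] at hq
  -- choose the test exponent m according to the shape of q
  obtain (((rfl | rfl | rfl) | ⟨i0, hi0, rfl⟩) | ⟨i0, hi0, rfl⟩) | rfl := hq
  -- case q = mA
  · intro hmem
    have hsub : Sset K c \ {mA K c} ⊆ (Vm K (E ![0,c,0,0]) : Set (MvPolynomial (Fin 4) K)) := by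
      rintro s ⟨hs, hne⟩
      simp only [Sset, Set.mem_union, Set.mem_insert_iff, Set.mem_setOf_eq,
        Set.mem_singleton_iff] at hs
      obtain (((rfl | rfl | rfl) | ⟨j, hj, rfl⟩) | ⟨j, hj, rfl⟩) | rfl := hs
      · exact absurd rfl hne
      · exact mon_mem_Vm (by intro h; have := h 3; simp at this)
      · exact sub_mem
          (mon_mem_Vm (by intro h; have := h 3; simp at this; omega))
          (mon_mem_Vm (by intro h; have := h 0; simp at this))
      · exact mon_mem_Vm (by intro h; have := h 2; simp at this)
      · exact mon_mem_Vm (by intro h; have := h 2; simp at this)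
      · exact mon_mem_Vm (by intro h; have := h 2; simp at this; omega)
    exact mon_not_mem_Vm _ ((Ideal.span_le.mpr hsub) hmem)
  -- case q = mB
  · intro hmem
    have hsub : Sset K c \ {mB K} ⊆ (Vm K (E ![0,1,0,1]) : Set (MvPolynomial (Fin 4) K)) := by
      rintro s ⟨hs, hne⟩
      simp only [Sset, Set.mem_union, Set.mem_insert_iff, Set.mem_setOf_eq,
        Set.mem_singleton_iff] at hs
      obtain (((rfl | rfl | rfl) | ⟨j, hj, rfl⟩) | ⟨j, hj, rfl⟩) | rfl := hs
      · exact mon_mem_Vm (by intro h; have := h 1; simp at this; omega)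
      · exact absurd rfl hne
      · exact sub_mem
          (mon_mem_Vm (by intro h; have := h 3; simp at this; omega))
          (mon_mem_Vm (by intro h; have := h 0; simp at this))
      · exact mon_mem_Vm (by intro h; have := h 2; simp at this)
      · exact mon_mem_Vm (by intro h; have := h 2; simp at this)
      · exact mon_mem_Vm (by intro h; have := h 2; simp at this; omega)
    exact mon_not_mem_Vm _ ((Ideal.span_le.mpr hsub) hmem)
  -- case q = gg
  · intro hmem
    have hsub : Sset K c \ {gg K c} ⊆ (Vm K (E ![0,0,0,c]) : Set (MvPolynomial (Fin 4) K)) := by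
      rintro s ⟨hs, hne⟩
      simp only [Sset, Set.mem_union, Set.mem_insert_iff, Set.mem_setOf_eq,
        Set.mem_singleton_iff] at hs
      obtain (((rfl | rfl | rfl) | ⟨j, hj, rfl⟩) | ⟨j, hj, rfl⟩) | rfl := hs
      · exact mon_mem_Vm (by intro h; have := h 1; simp at this; omega)
      · exact mon_mem_Vm (by intro h; have := h 1; simp at this)
      · exact absurd rfl hne
      · exact mon_mem_Vm (by intro h; have := h 2; simp at this)
      · exact mon_mem_Vm (by intro h; have := h 2; simp at this)
      · exact mon_mem_Vm (by intro h; have := h 2; simp at this; omega)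
    have hgg := (Ideal.span_le.mpr hsub) hmem
    have := hgg (E ![0,0,0,c]) le_rfl
    rw [gg, coeff_sub, coeff_mon, coeff_mon, if_pos rfl, if_neg] at this
    · simp at this
    · intro he
      have := congrFun (E_inj he) 0
      simp [E_apply] at this
  -- case q = PP i0
  · intro hmem
    have hsub : Sset K c \ {PP K c i0}
        ⊆ (Vm K (E ![0,c-(i0+1),3*i0+1,0]) : Set (MvPolynomial (Fin 4) K)) := by
      rintro s ⟨hs, hne⟩
      simp only [Sset, Set.mem_union, Set.mem_insert_iff, Set.mem_setOf_eq,
        Set.mem_singleton_iff] at hs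
      obtain (((rfl | rfl | rfl) | ⟨j, hj, rfl⟩) | ⟨j, hj, rfl⟩) | rfl := hs
      · exact mon_mem_Vm (by intro h; have := h 1; simp at this; omega)
      · exact mon_mem_Vm (by intro h; have := h 3; simp at this)
      · exact sub_mem
          (mon_mem_Vm (by intro h; have := h 3; simp at this; omega))
          (mon_mem_Vm (by intro h; have := h 0; simp at this))
      · by_cases hji : j = i0
        · subst hji; exact absurd rfl hne
        · rcases Nat.lt_or_ge j i0 with hlt | hge
          · exact mon_mem_Vm (by intro h; have := h 1; simp at this; omega)
          · exact mon_mem_Vm (by intro h; have := h 2; simp at this; omega)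
      · exact mon_mem_Vm (by intro h; have := h 3; simp at this; omega)
      · exact mon_mem_Vm (by intro h; have := h 2; simp at this; omega)
    exact mon_not_mem_Vm _ ((Ideal.span_le.mpr hsub) hmem)
  -- case q = QQ i0
  · intro hmem
    have hsub : Sset K c \ {QQ K c i0}
        ⊆ (Vm K (E ![0,0,3*i0+1,c-(i0+1)]) : Set (MvPolynomial (Fin 4) K)) := by
      rintro s ⟨hs, hne⟩
      simp only [Sset, Set.mem_union, Set.mem_insert_iff, Set.mem_setOf_eq,
        Set.mem_singleton_iff] at hs
      obtain (((rfl | rfl | rfl) | ⟨j, hj, rfl⟩) | ⟨j, hj, rfl⟩) | rfl := hs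
      · exact mon_mem_Vm (by intro h; have := h 1; simp at this; omega)
      · exact mon_mem_Vm (by intro h; have := h 1; simp at this)
      · exact sub_mem
          (mon_mem_Vm (by intro h; have := h 3; simp at this; omega))
          (mon_mem_Vm (by intro h; have := h 0; simp at this))
      · exact mon_mem_Vm (by intro h; have := h 1; simp at this; omega)
      · by_cases hji : j = i0
        · subst hji; exact absurd rfl hne
        · rcases Nat.lt_or_ge j i0 with hlt | hge
          · exact mon_mem_Vm (by intro h; have := h 3; simp at this; omega)
          · exact mon_mem_Vm (by intro h; have := h 2; simp at this; omega)
      · exact mon_mem_Vm (by intro h; have := h 2; simp at this; omega)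
    exact mon_not_mem_Vm _ ((Ideal.span_le.mpr hsub) hmem)
  -- case q = mC
  · intro hmem
    have hsub : Sset K c \ {mC K c}
        ⊆ (Vm K (E ![0,0,3*c-2,0]) : Set (MvPolynomial (Fin 4) K)) := by
      rintro s ⟨hs, hne⟩
      simp only [Sset, Set.mem_union, Set.mem_insert_iff, Set.mem_setOf_eq,
        Set.mem_singleton_iff] at hs
      obtain (((rfl | rfl | rfl) | ⟨j, hj, rfl⟩) | ⟨j, hj, rfl⟩) | rfl := hs
      · exact mon_mem_Vm (by intro h; have := h 1; simp at this; omega)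
      · exact mon_mem_Vm (by intro h; have := h 1; simp at this)
      · exact sub_mem
          (mon_mem_Vm (by intro h; have := h 3; simp at this; omega))
          (mon_mem_Vm (by intro h; have := h 0; simp at this))
      · exact mon_mem_Vm (by intro h; have := h 1; simp at this; omega)
      · exact mon_mem_Vm (by intro h; have := h 3; simp at this; omega)
      · exact absurd rfl hne
    exact mon_not_mem_Vm _ ((Ideal.span_le.mpr hsub) hmem)


open scoped Classical
lemma mon_inj : Function.Injective (mon K) := fun a b h =>
  E_inj (monomial_left_injective (one_ne_zero) h)

lemma mon_ne_of_ne {a b : Fin 4 → ℕ} (i : Fin 4) (h : a i ≠ b i) :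
    mon K a ≠ mon K b := fun hh => h (congrFun (mon_inj hh) i)

lemma coeff_mon' (u : Fin 4 →₀ ℕ) (w : Fin 4 → ℕ) :
    coeff u (mon K w) = if E w = u then 1 else 0 := coeff_monomial u (E w) 1

lemma gg_ne_mon {c : ℕ} (hc : 2 ≤ c) (w : Fin 4 → ℕ) : gg K c ≠ mon K w := by
  intro h
  have hne : E (![0,0,0,c] : Fin 4 → ℕ) ≠ E (![1,c-1,0,0] : Fin 4 → ℕ) := by
    intro he
    have := congrFun (E_inj he) 0
    simp [E_apply] at this
  have h1 := congrArg (coeff (E (![0,0,0,c] : Fin 4 → ℕ))) h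
  have h2 := congrArg (coeff (E (![1,c-1,0,0] : Fin 4 → ℕ))) h
  rw [gg, coeff_sub, coeff_mon', coeff_mon', coeff_mon', if_pos rfl, if_neg (Ne.symm hne)] at h1
  rw [gg, coeff_sub, coeff_mon', coeff_mon', coeff_mon', if_neg hne, if_pos rfl] at h2
  simp only [sub_zero, zero_sub] at h1 h2
  have hw1 : E w = E (![0,0,0,c] : Fin 4 → ℕ) := by
    by_contra hcon
    rw [if_neg hcon] at h1
    exact one_ne_zero h1
  have hw2 : E w ≠ E (![1,c-1,0,0] : Fin 4 → ℕ) := fun hh => hne (hw1.symm.trans hh)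
  rw [if_neg hw2] at h2
  exact one_ne_zero (neg_eq_zero.mp h2)

noncomputable def Fs (K : Type*) [Field K] (c : ℕ) : Finset (MvPolynomial (Fin 4) K) :=
  insert (mA K c) (insert (mB K) (insert (gg K c)
    (((Finset.Iic (c-2)).image (PP K c) ∪ (Finset.Iic (c-2)).image (QQ K c))
      ∪ {mC K c})))

lemma Sset_eq_Fs (c : ℕ) : Sset K c = ↑(Fs K c) := by
  ext q
  simp only [Sset, Fs, Set.mem_union, Set.mem_insert_iff, Set.mem_setOf_eq,
    Set.mem_singleton_iff, Finset.coe_insert, Finset.coe_union, Finset.coe_image,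
    Finset.coe_Iic, Set.mem_image, Set.mem_Iic, Finset.coe_singleton]
  constructor
  · rintro ((((h | h | h) | ⟨i, hi, rfl⟩) | ⟨i, hi, rfl⟩) | h)
    · exact Or.inl h
    · exact Or.inr (Or.inl h)
    · exact Or.inr (Or.inr (Or.inl h))
    · exact Or.inr (Or.inr (Or.inr (Or.inl (Or.inl ⟨i, hi, rfl⟩))))
    · exact Or.inr (Or.inr (Or.inr (Or.inl (Or.inr ⟨i, hi, rfl⟩))))
    · exact Or.inr (Or.inr (Or.inr (Or.inr h)))
  · rintro (h | h | h | ((⟨i, hi, rfl⟩ | ⟨i, hi, rfl⟩) | h))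
    · exact Or.inl (Or.inl (Or.inl (Or.inl h)))
    · exact Or.inl (Or.inl (Or.inl (Or.inr (Or.inl h))))
    · exact Or.inl (Or.inl (Or.inl (Or.inr (Or.inr h))))
    · exact Or.inl (Or.inl (Or.inr ⟨i, hi, rfl⟩))
    · exact Or.inl (Or.inr ⟨i, hi, rfl⟩)
    · exact Or.inr h

lemma PP_vec_ne_QQ_vec {c : ℕ} (hc : 2 ≤ c) {i j : ℕ} (hi : i ≤ c-2) (hj : j ≤ c-2) :
    PP K c i ≠ QQ K c j := by
  apply mon_ne_of_ne 1
  simp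
  omega

lemma Fs_card {c : ℕ} (hc : 2 ≤ c) : (Fs K c).card = 2*c + 2 := by
  have hPinj : Set.InjOn (PP K c) ↑(Finset.Iic (c-2)) := by
    intro i hi j hj h
    have := congrFun (mon_inj h) 2
    simp at this
    omega
  have hQinj : Set.InjOn (QQ K c) ↑(Finset.Iic (c-2)) := by
    intro i hi j hj h
    have := congrFun (mon_inj h) 2
    simp at this
    omega
  have hPQdisj : Disjoint ((Finset.Iic (c-2)).image (PP K c))
      ((Finset.Iic (c-2)).image (QQ K c)) := by
    rw [Finset.disjoint_left]
    rintro q hq1 hq2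
    rw [Finset.mem_image] at hq1 hq2
    obtain ⟨i, hi, rfl⟩ := hq1
    obtain ⟨j, hj, hji⟩ := hq2
    exact PP_vec_ne_QQ_vec hc (Finset.mem_Iic.mp hi) (Finset.mem_Iic.mp hj) hji.symm
  have hCdisj : Disjoint ((Finset.Iic (c-2)).image (PP K c)
      ∪ (Finset.Iic (c-2)).image (QQ K c)) ({mC K c} : Finset _) := by
    rw [Finset.disjoint_right]
    intro q hq hq2
    rw [Finset.mem_singleton] at hq
    subst hq
    rw [Finset.mem_union, Finset.mem_image, Finset.mem_image] at hq2
    rcases hq2 with ⟨i, hi, hh⟩ | ⟨i, hi, hh⟩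
    · have hi' := Finset.mem_Iic.mp hi
      exact mon_ne_of_ne 1 (by simp <;> omega) hh
    · have hi' := Finset.mem_Iic.mp hi
      exact mon_ne_of_ne 3 (by simp <;> omega) hh
  have hgg : gg K c ∉ ((Finset.Iic (c-2)).image (PP K c)
      ∪ (Finset.Iic (c-2)).image (QQ K c)) ∪ {mC K c} := by
    intro h
    simp only [Finset.mem_union, Finset.mem_image, Finset.mem_singleton] at h
    rcases h with (⟨i, _, hh⟩ | ⟨i, _, hh⟩) | hh
    · exact gg_ne_mon hc _ hh.symm
    · exact gg_ne_mon hc _ hh.symm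
    · exact gg_ne_mon hc _ hh
  have hmB : mB K ∉ insert (gg K c) (((Finset.Iic (c-2)).image (PP K c)
      ∪ (Finset.Iic (c-2)).image (QQ K c)) ∪ {mC K c}) := by
    intro h
    simp only [Finset.mem_insert, Finset.mem_union, Finset.mem_image,
      Finset.mem_singleton] at h
    rcases h with hh | (⟨i, hi, hh⟩ | ⟨i, hi, hh⟩) | hh
    · exact gg_ne_mon hc _ hh.symm
    · exact mon_ne_of_ne 3 (by simp) hh
    · exact mon_ne_of_ne 1 (by simp) hh.symm
    · exact mon_ne_of_ne 1 (by simp <;> omega) hh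
  have hmA : mA K c ∉ insert (mB K) (insert (gg K c) (((Finset.Iic (c-2)).image (PP K c)
      ∪ (Finset.Iic (c-2)).image (QQ K c)) ∪ {mC K c})) := by
    intro h
    simp only [Finset.mem_insert, Finset.mem_union, Finset.mem_image,
      Finset.mem_singleton] at h
    rcases h with hh | hh | (⟨i, hi, hh⟩ | ⟨i, hi, hh⟩) | hh
    · exact mon_ne_of_ne 3 (by simp <;> omega) hh
    · exact gg_ne_mon hc _ hh.symm
    · exact mon_ne_of_ne 2 (by simp) hh.symm
    · exact mon_ne_of_ne 1 (by simp <;> omega) hh.symm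
    · exact mon_ne_of_ne 1 (by simp <;> omega) hh
  rw [Fs, Finset.card_insert_of_notMem hmA, Finset.card_insert_of_notMem hmB,
    Finset.card_insert_of_notMem hgg, Finset.card_union_of_disjoint hCdisj,
    Finset.card_union_of_disjoint hPQdisj,
    Finset.card_image_of_injOn hPinj, Finset.card_image_of_injOn hQinj,
    Finset.card_singleton, Nat.card_Iic]
  omega

lemma Sset_ncard {c : ℕ} (hc : 2 ≤ c) : (Sset K c).ncard = 2*c + 2 := by
  rw [Sset_eq_Fs, Set.ncard_coe_finset, Fs_card hc]


end Stmt14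

/-- for an integer `c ≥ 2` with `227 ∤ c + 80`, and
`n_1 = 3c² − 4c + 2`, `n_2 = 6c² + 9c + 2`, `n_3 = 4c² + 5c − 3`, `n_4 = 6c² + 6c − 11`,
the ideal `I(C)_*` is minimally generated by
`{x_2^c, x_2 x_4, x_4^c − x_1 x_2^{c−1}}
  ∪ {x_2^{c−(i+1)} x_3^{3i+1} : 0 ≤ i ≤ c−2}
  ∪ {x_3^{3i+1} x_4^{c−(i+1)} : 0 ≤ i ≤ c−2} ∪ {x_3^{3c−2}}`,
a set of exactly `2c + 2` elements. -/
theorem stmt_14 {K : Type*} [Field K] (c : ℕ) (hc : 2 ≤ c) (h227 : ¬ (227 ∣ c + 80))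
    (n : Fin 4 → ℕ)
    (hn : n = ![3 * c ^ 2 - 4 * c + 2, 6 * c ^ 2 + 9 * c + 2,
      4 * c ^ 2 + 5 * c - 3, 6 * c ^ 2 + 6 * c - 11])
    (S : Set (MvPolynomial (Fin 4) K))
    (hS : S = ({X 1 ^ c, X 1 * X 3, X 3 ^ c - X 0 * X 1 ^ (c - 1)} :
        Set (MvPolynomial (Fin 4) K))
      ∪ {q | ∃ i, i ≤ c - 2 ∧ q = X 1 ^ (c - (i + 1)) * X 2 ^ (3 * i + 1)}
      ∪ {q | ∃ i, i ≤ c - 2 ∧ q = X 2 ^ (3 * i + 1) * X 3 ^ (c - (i + 1))}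
      ∪ {X 2 ^ (3 * c - 2)}) :
    idealStar (toricIdeal K n) = Ideal.span S ∧
    (∀ q ∈ S, Ideal.span (S \ {q}) ≠ idealStar (toricIdeal K n)) ∧
    S.ncard = 2 * c + 2 := by
  have hn' : n = Stmt14.nv c := by rw [hn]; rfl
  have hS' : S = Stmt14.Sset K c := by rw [hS]; exact Stmt14.S_conv c
  rw [hn', hS']
  have hmain : idealStar (toricIdeal K (Stmt14.nv c)) = Ideal.span (Stmt14.Sset K c) := by
    apply le_antisymm
    · exact Stmt14.idealStar_le_span hc h227
    · apply Ideal.span_le.mpr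
      intro q hq
      exact Ideal.subset_span (Stmt14.Sset_subset_starGens hc hq)
  refine ⟨hmain, ?_, Stmt14.Sset_ncard hc⟩
  intro q hq heq
  have h1 : q ∈ Ideal.span (Stmt14.Sset K c \ {q}) := by
    rw [heq, hmain]
    exact Ideal.subset_span hq
  exact Stmt14.not_mem_span_diff hc hq h1

end
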